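/- Let $n \geq 1$ and $1 \leq x$, $x+1 < y \leq n$. Let $A^c_{x,y} = \{ w \in S_n \mid w(x) < w(y) \}$. Then the map $f'_{xy} : A^c_{x,y} \to A^c_{x+1,y}$ defined by $f'_{xy}(w) = w$ if $w(x+1) < w(y)$, and $f'_{xy}(w) = w \cdot s_x$ if $w(x+1) > w(y)$, is a well-defined bijection onto $A^c_{x+1,y} = \{ w \in S_n \mid w(x+1) < w(y) \}$. -/
import Mathlib


/-- For positions `x`, `x1 = x+1`, `y` with `x+1 < y` in `Fin n`,
the map `f'_{xy}` sending `w ↦ w` if `w(x+1) < w(y)` and `w ↦ w·s_x` if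
`w(x+1) > w(y)` is a well-defined bijection from
`Aᶜ_{x,y} = {w | w(x) < w(y)}` onto `Aᶜ_{x+1,y} = {w | w(x+1) < w(y)}`. -/
theorem stmt1 (n : ℕ) (x x1 y : Fin n) (hx1 : (x1 : ℕ) = (x : ℕ) + 1)
    (hxy : x1 < y) :
    Set.BijOn (fun w : Equiv.Perm (Fin n) =>
      if w x1 < w y then w else w * Equiv.swap x x1)
      {w : Equiv.Perm (Fin n) | w x < w y}
      {w : Equiv.Perm (Fin n) | w x1 < w y} := by
  have hx1y : x1 ≠ y := ne_of_lt hxy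
  have hxy' : x ≠ y := by
    intro h; subst h
    exact absurd hx1 (by omega : ¬ (x1:ℕ) = (x:ℕ)+1)
  have hxx1 : x ≠ x1 := by
    intro h
    rw [← h] at hx1; omega
  have sx : ∀ w : Equiv.Perm (Fin n), (w * Equiv.swap x x1) x = w x1 := by
    intro w; simp [Equiv.Perm.mul_apply]
  have sx1 : ∀ w : Equiv.Perm (Fin n), (w * Equiv.swap x x1) x1 = w x := by
    intro w; simp [Equiv.Perm.mul_apply]
  have sy : ∀ w : Equiv.Perm (Fin n), (w * Equiv.swap x x1) y = w y := by
    intro w; simp [Equiv.Perm.mul_apply,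
      Equiv.swap_apply_of_ne_of_ne (Ne.symm hxy') (Ne.symm hx1y)]
  have hinj : ∀ w : Equiv.Perm (Fin n), w y ≠ w x1 := fun w h =>
    hx1y (w.injective h.symm)
  refine ⟨?_, ?_, ?_⟩
  · intro w hw
    simp only [Set.mem_setOf_eq] at hw ⊢
    by_cases h : w x1 < w y
    · simp [h]
    · simp only [h, if_false, sx1, sy]; exact hw
  · intro a ha b hb hab
    simp only [Set.mem_setOf_eq] at ha hb
    simp only at hab
    by_cases h1 : a x1 < a y <;> by_cases h2 : b x1 < b y <;>
      simp only [h1, h2, if_true, if_false] at hab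
    · exact hab
    · exfalso
      have hax := sx b; rw [← hab] at hax
      have hy := sy b; rw [← hab] at hy
      rw [hax, hy] at ha
      exact h2 ha
    · exfalso
      have hbx := sx a; rw [hab] at hbx
      have hy := sy a; rw [hab] at hy
      rw [hbx, hy] at hb
      exact h1 hb
    · exact mul_right_cancel hab
  · intro v hv
    simp only [Set.mem_setOf_eq] at hv
    by_cases h : v x < v y
    · exact ⟨v, h, by simp [hv]⟩
    · refine ⟨v * Equiv.swap x x1, ?_, ?_⟩
      · simp only [Set.mem_setOf_eq, sx, sy]; exact hv
      · simp only [sx1, sy]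
        have hnv : ¬ v x < v y := h
        simp only [hnv, if_false]
        rw [mul_assoc]
        simp
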